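/- Let (v_ε) be an S-moderate net of Schwartz functions on ℝ^d and let (ξ_{0,ε}) be a net of unit vectors in ℝ^d. Then the following are equivalent: (1) there exist a slow scale infinitesimal net (r_ε) of positive reals and a positive slow scale net (R_ε) such that for every moderate net (ξ_ε) of nonzero vectors for which there are negligible nets (n_ε), (n'_ε) with |ξ_ε/|ξ_ε| − ξ_{0,ε}| ≤ r_ε + n_ε and |ξ_ε| ≥ R_ε − n'_ε for small ε, the net (\hat v_ε(ξ_ε)) is negligible; (2) for every moderate fast scale net (ξ_ε) such that (ξ_ε/|ξ_ε| − ξ_{0,ε}) is a fast scale infinitesimal, the net (\hat v_ε(ξ_ε)) is negligible; (3) for each integer m ≥ 1, sup over {ξ : |ξ| ≥ ε^{−1/m} and |ξ/|ξ| − ξ_{0,ε}| ≤ ε^{1/m}} of |\hat v_ε(ξ)| ≤ ε^m for small ε; (4) there exists N ∈ ℕ such that for each integer m ≥ 1, sup over {ξ ≠ 0 : |ξ/|ξ| − ξ_{0,ε}| ≤ ε^{1/m}} of ⟨ξ⟩^m |\hat v_ε(ξ)| ≤ ε^{−N} for small ε. -/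

import Mathlib

open MeasureTheory Set Metric
open scoped RealInnerProductSpace

noncomputable section

/-- Euclidean space `ℝ^d`. -/
abbrev Eu (d : ℕ) : Type := EuclideanSpace ℝ (Fin d)

/-- A property of `ε` holds "for small ε", i.e. on some interval `(0, ε₀]`. -/
def SmallE (P : ℝ → Prop) : Prop :=
  ∃ ε₀ : ℝ, 0 < ε₀ ∧ ∀ ε : ℝ, 0 < ε → ε ≤ ε₀ → P ε

/-- A net in a normed space is moderate. -/
def ModNet {V : Type*} [NormedAddCommGroup V] (x : ℝ → V) : Prop :=
  ∃ N : ℕ, SmallE fun ε => ‖x ε‖ ≤ ε ^ (-(N : ℝ))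

/-- A net in a normed space is negligible. -/
def NegNet {V : Type*} [NormedAddCommGroup V] (x : ℝ → V) : Prop :=
  ∀ m : ℕ, SmallE fun ε => ‖x ε‖ ≤ ε ^ (m : ℝ)

/-- A fast scale infinitesimal net. -/
def FastInf {V : Type*} [NormedAddCommGroup V] (x : ℝ → V) : Prop :=
  ∃ a : ℝ, 0 < a ∧ SmallE fun ε => ‖x ε‖ ≤ ε ^ a

/-- A slow scale infinitesimal net of positive reals. -/
def SlowInfPos (r : ℝ → ℝ) : Prop :=
  (∀ ε : ℝ, 0 < ε → ε ≤ 1 → 0 < r ε) ∧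
    ∀ a : ℝ, 0 < a → SmallE fun ε => ε ^ a ≤ r ε ∧ r ε ≤ a

/-- A fast scale net. -/
def FastScale {V : Type*} [NormedAddCommGroup V] (x : ℝ → V) : Prop :=
  ∃ a : ℝ, 0 < a ∧ SmallE fun ε => ε ^ (-a) ≤ ‖x ε‖

/-- A slow scale net. -/
def SlowScale {V : Type*} [NormedAddCommGroup V] (x : ℝ → V) : Prop :=
  ∀ a : ℝ, 0 < a → SmallE fun ε => ‖x ε‖ ≤ ε ^ (-a)

/-- A slow scale net of positive reals. -/
def SlowScalePos (R : ℝ → ℝ) : Prop :=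
  (∀ ε : ℝ, 0 < ε → ε ≤ 1 → 0 < R ε) ∧
    ∀ a : ℝ, 0 < a → SmallE fun ε => R ε ≤ ε ^ (-a)

/-- First order partial derivative in the `i`-th coordinate direction. -/
def pd {d : ℕ} {F : Type*} [NormedAddCommGroup F] [NormedSpace ℝ F]
    (i : Fin d) (f : Eu d → F) : Eu d → F :=
  fun x => fderiv ℝ f x (EuclideanSpace.single i 1)

/-- Iterated partial derivative `∂^α` along a list of coordinate directions
(a multi-index `α`). -/
def pdL {d : ℕ} {F : Type*} [NormedAddCommGroup F] [NormedSpace ℝ F]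
    (L : List (Fin d)) (f : Eu d → F) : Eu d → F :=
  L.foldr pd f

/-- A moderate net of smooth functions on an open set `Ω`. -/
def SmoothModNetOn {d : ℕ} (Ω : Set (Eu d)) (u : ℝ → Eu d → ℂ) : Prop :=
  (∀ ε : ℝ, 0 < ε → ε ≤ 1 → ContDiffOn ℝ (⊤ : ℕ∞) (u ε) Ω) ∧
    ∀ K : Set (Eu d), IsCompact K → K ⊆ Ω → ∀ L : List (Fin d), ∃ N : ℕ,
      SmallE fun ε => ∀ x ∈ K, ‖pdL L (u ε) x‖ ≤ ε ^ (-(N : ℝ))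

/-- A moderate net of smooth functions with supports all contained in one
common compact subset of `Ω`. -/
def CptModNet {d : ℕ} (Ω : Set (Eu d)) (v : ℝ → Eu d → ℂ) : Prop :=
  (∀ ε : ℝ, 0 < ε → ε ≤ 1 → ContDiff ℝ (⊤ : ℕ∞) (v ε)) ∧
  (∃ K : Set (Eu d), IsCompact K ∧ K ⊆ Ω ∧
    ∀ ε : ℝ, 0 < ε → ε ≤ 1 → tsupport (v ε) ⊆ K) ∧
  (∀ L : List (Fin d), ∃ N : ℕ, SmallE fun ε =>
    ∀ x : Eu d, ‖pdL L (v ε) x‖ ≤ ε ^ (-(N : ℝ)))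

/-- The Fourier transform `∫ e^{-i x·ξ} w(x) dx`. -/
def FT {d : ℕ} (w : Eu d → ℂ) (ξ : Eu d) : ℂ :=
  ∫ x : Eu d, Complex.exp (-(Complex.I * ((⟪x, ξ⟫ : ℝ) : ℂ))) * w x

/-- The net `(u_ε)` is microlocally regular at the generalized point `(x₀, ξ₀)`. -/
def MicroReg {d : ℕ} (Ω : Set (Eu d)) (u : ℝ → Eu d → ℂ) (x₀ ξ₀ : ℝ → Eu d) : Prop :=
  ∃ v : ℝ → Eu d → ℂ, CptModNet Ω v ∧
    (∀ m : ℕ, 1 ≤ m → SmallE fun ε => ∀ x : Eu d,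
      ‖x - x₀ ε‖ ≤ ε ^ (1 / (m : ℝ)) → ‖u ε x - v ε x‖ ≤ ε ^ (m : ℝ)) ∧
    (∀ m : ℕ, 1 ≤ m → SmallE fun ε => ∀ ξ : Eu d,
      ε ^ (-(1 / (m : ℝ))) ≤ ‖ξ‖ → ‖‖ξ‖⁻¹ • ξ - ξ₀ ε‖ ≤ ε ^ (1 / (m : ℝ)) →
        ‖FT (v ε) ξ‖ ≤ ε ^ (m : ℝ))

/-- The "japanese bracket" `⟨ξ⟩ = (1+|ξ|²)^{1/2}`. -/
def jap {d : ℕ} (ξ : Eu d) : ℝ := Real.sqrt (1 + ‖ξ‖ ^ 2)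

/-- An S-moderate net of Schwartz functions. -/
def SModNet {d : ℕ} (v : ℝ → SchwartzMap (Eu d) ℂ) : Prop :=
  ∀ (L : List (Fin d)) (β : Fin d → ℕ), ∃ N : ℕ, SmallE fun ε =>
    ∀ x : Eu d, |∏ j, (x j) ^ (β j)| * ‖pdL L (⇑(v ε)) x‖ ≤ ε ^ (-(N : ℝ))

namespace Stmt1Aux

open SchwartzMap Complex Real FourierTransform

variable {d : ℕ}

lemma smallE_and {P Q : ℝ → Prop} (hP : SmallE P) (hQ : SmallE Q) :
    SmallE fun ε => P ε ∧ Q ε := by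
  obtain ⟨a, ha, hPa⟩ := hP
  obtain ⟨b, hb, hQb⟩ := hQ
  exact ⟨min a b, lt_min ha hb, fun ε hε hε' =>
    ⟨hPa ε hε (hε'.trans (min_le_left _ _)), hQb ε hε (hε'.trans (min_le_right _ _))⟩⟩

lemma smallE_forall_fintype {ι : Type*} [Fintype ι] {P : ι → ℝ → Prop}
    (h : ∀ i, SmallE (P i)) : SmallE fun ε => ∀ i, P i ε := by
  classical
  choose t ht hP using h
  rcases isEmpty_or_nonempty ι with hι | hι
  · exact ⟨1, one_pos, fun ε _ _ i => (IsEmpty.false i).elim⟩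
  · obtain ⟨i₀, -, hmin⟩ := Finset.exists_min_image Finset.univ t
      ⟨Classical.arbitrary ι, Finset.mem_univ _⟩
    exact ⟨t i₀, ht i₀, fun ε hε hε' i => hP i ε hε (hε'.trans (hmin i (Finset.mem_univ i)))⟩

def pdS (L : List (Fin d)) (w : SchwartzMap (Eu d) ℂ) : SchwartzMap (Eu d) ℂ :=
  L.foldr (fun i f => LineDeriv.lineDerivOp (EuclideanSpace.single i (1:ℝ) : Eu d) f) w

lemma pdL_eq (L : List (Fin d)) (w : SchwartzMap (Eu d) ℂ) : pdL L ⇑w = ⇑(pdS L w) := by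
  induction L with
  | nil => rfl
  | cons i L ih =>
    show pd i (pdL L ⇑w) = _
    rw [ih]
    funext x
    simp [pd, pdS, SchwartzMap.lineDerivOp_apply_eq_fderiv]

lemma FT_eq (w : Eu d → ℂ) (ξ : Eu d) : FT w ξ = 𝓕 w ((2 * π)⁻¹ • ξ) := by
  rw [Real.fourier_eq']
  unfold FT
  congr 1
  funext x
  rw [smul_eq_mul]
  congr 1
  have h2π : (2 * π) ≠ 0 := by positivity
  have h : ⟪x, (2 * π)⁻¹ • ξ⟫ = (2 * π)⁻¹ * ⟪x, ξ⟫ := real_inner_smul_right x ξ _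
  rw [h]
  have h2 : -2 * π * ((2 * π)⁻¹ * ⟪x, ξ⟫) = -⟪x, ξ⟫ := by field_simp
  rw [h2]
  push_cast
  ring

lemma norm_FT_le (w : Eu d → ℂ) (ξ : Eu d) : ‖FT w ξ‖ ≤ ∫ x, ‖w x‖ := by
  refine le_trans (norm_integral_le_integral_norm _) (le_of_eq ?_)
  congr 1
  funext x
  rw [norm_mul]
  have h0 : (-(Complex.I * ((⟪x, ξ⟫ : ℝ) : ℂ))).re = 0 := by simp
  rw [Complex.norm_exp, h0, Real.exp_zero, one_mul]

lemma F_pd (w : SchwartzMap (Eu d) ℂ) (j : Fin d) (ξ : Eu d) :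
    𝓕 (⇑(LineDeriv.lineDerivOp (EuclideanSpace.single j (1:ℝ) : Eu d) w)) ξ
      = (2 * π * Complex.I * (ξ j)) * 𝓕 (⇑w) ξ := by
  have hf : Integrable (⇑w) := w.integrable
  have h'f : Differentiable ℝ (⇑w) := (w.smooth ⊤).differentiable (by simp)
  have hf' : Integrable (fderiv ℝ (⇑w)) := by
    refine ((SchwartzMap.fderivCLM ℝ (Eu d) ℂ w).integrable).congr ?_
    exact Filter.Eventually.of_forall (fun x => by rw [SchwartzMap.fderivCLM_apply])
  have h1 : ⇑(LineDeriv.lineDerivOp (EuclideanSpace.single j (1:ℝ) : Eu d) w)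
      = fun x => fderiv ℝ (⇑w) x (EuclideanSpace.single j 1) := by
    funext x; rw [SchwartzMap.lineDerivOp_apply_eq_fderiv]
  rw [h1, ← Real.fourier_continuousLinearMap_apply hf',
    Real.fourier_fderiv hf h'f hf']
  rw [VectorFourier.fourierSMulRight_apply]
  have hj : (-(innerSL ℝ (E := Eu d))) ξ (EuclideanSpace.single j 1) = -(ξ j) := by
    simp [EuclideanSpace.inner_single_right, real_inner_comm]
  rw [hj]
  simp only [smul_eq_mul, Complex.real_smul]
  push_cast
  ring

lemma FT_pd (w : SchwartzMap (Eu d) ℂ) (j : Fin d) (ξ : Eu d) :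
    FT (⇑(LineDeriv.lineDerivOp (EuclideanSpace.single j (1:ℝ) : Eu d) w)) ξ
      = (Complex.I * (ξ j)) * FT (⇑w) ξ := by
  rw [FT_eq, FT_eq, F_pd]
  have hπ : (2 * π) ≠ 0 := by positivity
  have h : ((2 * π)⁻¹ • ξ) j = (2 * π)⁻¹ * ξ j := rfl
  rw [h]
  have hπc : ((2 * π : ℝ) : ℂ) ≠ 0 := Complex.ofReal_ne_zero.2 hπ
  push_cast at hπc ⊢
  field_simp

lemma FT_replicate (w : SchwartzMap (Eu d) ℂ) (j : Fin d) (k : ℕ) (ξ : Eu d) :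
    FT (⇑(pdS (List.replicate k j) w)) ξ = (Complex.I * (ξ j)) ^ k * FT (⇑w) ξ := by
  induction k with
  | zero => simp [pdS]
  | succ k ih =>
    rw [List.replicate_succ]
    show FT (⇑(LineDeriv.lineDerivOp (EuclideanSpace.single j (1:ℝ) : Eu d)
      (pdS (List.replicate k j) w))) ξ = _
    rw [FT_pd, ih]
    ring

lemma sum_pow_le {ι : Type*} (s : Finset ι) (hs : s.Nonempty) (a : ι → ℝ)
    (ha : ∀ i ∈ s, 0 ≤ a i) (q : ℕ) :
    (∑ i ∈ s, a i) ^ q ≤ (s.card : ℝ) ^ q * ∑ i ∈ s, (a i) ^ q := by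
  obtain ⟨i₀, hi₀, hmax⟩ := s.exists_max_image a hs
  have h1 : ∑ i ∈ s, a i ≤ (s.card : ℝ) * a i₀ := by
    calc ∑ i ∈ s, a i ≤ ∑ _i ∈ s, a i₀ := Finset.sum_le_sum (fun i hi => hmax i hi)
    _ = (s.card : ℝ) * a i₀ := by rw [Finset.sum_const, nsmul_eq_mul]
  calc (∑ i ∈ s, a i) ^ q ≤ ((s.card : ℝ) * a i₀) ^ q :=
        pow_le_pow_left₀ (Finset.sum_nonneg ha) h1 q
    _ = (s.card : ℝ) ^ q * (a i₀) ^ q := mul_pow _ _ _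
    _ ≤ (s.card : ℝ) ^ q * ∑ i ∈ s, (a i) ^ q := by
        refine mul_le_mul_of_nonneg_left ?_ (by positivity)
        exact Finset.single_le_sum (fun i hi => pow_nonneg (ha i hi) q) hi₀

lemma one_add_sum_pow_le (a : Fin d → ℝ) (ha : ∀ j, 0 ≤ a j) (q : ℕ) :
    (1 + ∑ j, a j) ^ q ≤ ((d : ℝ) + 1) ^ q * (1 + ∑ j, (a j) ^ q) := by
  have h := sum_pow_le (Finset.univ : Finset (Fin (d+1))) ⟨0, Finset.mem_univ 0⟩
    (Fin.cons 1 a) (fun i _ => by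
      refine Fin.cases ?_ ?_ i
      · simp
      · intro j; simpa using ha j) q
  rw [Fin.sum_univ_succ] at h
  simp only [Fin.cons_zero, Fin.cons_succ, Finset.card_univ, Fintype.card_fin, one_pow] at h
  rw [Fin.sum_univ_succ] at h
  simp only [Fin.cons_zero, Fin.cons_succ, one_pow] at h
  convert h using 2
  push_cast
  ring

lemma rpow_mono {ε : ℝ} (hε : 0 < ε) (hε1 : ε ≤ 1) {y z : ℝ} (h : z ≤ y) :
    ε ^ y ≤ ε ^ z :=
  Real.rpow_le_rpow_of_exponent_ge hε hε1 h

lemma rpow_neg_nat_mono {ε : ℝ} (hε : 0 < ε) (hε1 : ε ≤ 1) {N M : ℕ} (h : N ≤ M) :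
    ε ^ (-(N : ℝ)) ≤ ε ^ (-(M : ℝ)) :=
  rpow_mono hε hε1 (neg_le_neg (show (N:ℝ) ≤ (M:ℝ) from Nat.cast_le.2 h))

lemma norm_sq_eq (x : Eu d) : ‖x‖ ^ 2 = ∑ j, (x j) ^ 2 := by
  rw [EuclideanSpace.norm_eq]
  rw [Real.sq_sqrt (Finset.sum_nonneg (fun j (_ : j ∈ Finset.univ) => sq_nonneg ‖x j‖))]
  exact Finset.sum_congr rfl (fun j _ => by rw [Real.norm_eq_abs, _root_.sq_abs])

lemma L1_mod (v : ℝ → SchwartzMap (Eu d) ℂ) (hv : SModNet v) (L : List (Fin d)) :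
    ∃ N : ℕ, SmallE fun ε => (∫ x : Eu d, ‖pdS L (v ε) x‖) ≤ ε ^ (-(N : ℝ)) := by
  classical
  obtain ⟨N₀, h₀⟩ := hv L (fun _ => 0)
  choose Nj hj using fun j : Fin d => hv L (fun i => if i = j then 2 * (d + 1) else 0)
  set Nmax : ℕ := max N₀ (Finset.univ.sup Nj) with hNmax
  refine ⟨Nmax + 1, ?_⟩
  obtain ⟨e, he, hall⟩ := smallE_and h₀ (smallE_forall_fintype hj)
  set C : ℝ := ∫ x : Eu d, ((1 + ‖x‖) ^ (2 * (d + 1)) : ℝ)⁻¹ with hC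
  have hC0 : 0 ≤ C := integral_nonneg (fun x => by positivity)
  set K : ℝ := (2 * ((d : ℝ) + 1)) ^ (d + 1) * ((d : ℝ) + 1) with hK
  have hK0 : 0 < K := by positivity
  have hmaj : Integrable (fun x : Eu d => ((1 + ‖x‖) ^ (2 * (d + 1)) : ℝ)⁻¹) := by
    have h1 : ((Module.finrank ℝ (Eu d) : ℝ)) < ((2 * (d + 1) : ℕ) : ℝ) := by
      rw [finrank_euclideanSpace_fin]
      push_cast
      linarith
    have h2 := integrable_one_add_norm (E := Eu d) (μ := volume) (r := ((2 * (d + 1) : ℕ) : ℝ)) h1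
    refine h2.congr ?_
    refine Filter.Eventually.of_forall (fun x => ?_)
    dsimp only
    rw [Real.rpow_neg (by positivity), Real.rpow_natCast]
  refine ⟨min (min e 1) (K * C + 1)⁻¹, lt_min (lt_min he one_pos) (by positivity),
    fun ε hε hε' => ?_⟩
  have hεe : ε ≤ e := hε'.trans ((min_le_left _ _).trans (min_le_left _ _))
  have hε1 : ε ≤ 1 := hε'.trans ((min_le_left _ _).trans (min_le_right _ _))
  have hεK : ε ≤ (K * C + 1)⁻¹ := hε'.trans (min_le_right _ _)
  obtain ⟨hb0, hbj⟩ := hall ε hε hεe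
  have hcast : (-(((Nmax + 1 : ℕ)) : ℝ)) = -((Nmax : ℝ) + 1) := by push_cast; ring
  rw [hcast]
  have hpt0 : ∀ x : Eu d, ((1 + ‖x‖) ^ (2 * (d + 1))) * ‖pdS L (v ε) x‖
      ≤ K * ε ^ (-(Nmax : ℝ)) := by
    intro x
    set n : ℝ := ‖pdS L (v ε) x‖ with hn
    have hn0 : 0 ≤ n := norm_nonneg _
    have e2 : ((1 + ‖x‖) ^ 2 : ℝ) ≤ 2 * (1 + ‖x‖ ^ 2) := by nlinarith [sq_nonneg (1 - ‖x‖)]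
    have e3 : ((1 + ‖x‖) ^ (2 * (d + 1)) : ℝ) ≤ (2 * (1 + ‖x‖ ^ 2)) ^ (d + 1) := by
      rw [pow_mul]
      exact pow_le_pow_left₀ (by positivity) e2 (d + 1)
    have e4 : (1 + ‖x‖ ^ 2 : ℝ) ^ (d + 1)
        ≤ ((d : ℝ) + 1) ^ (d + 1) * (1 + ∑ j, (x j) ^ (2 * (d + 1))) := by
      rw [norm_sq_eq]
      have h5 := one_add_sum_pow_le (fun j => (x j) ^ 2) (fun j => sq_nonneg _) (d + 1)
      simpa [← pow_mul, mul_comm (d + 1) 2] using h5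
    have hb0' : n ≤ ε ^ (-(Nmax : ℝ)) := by
      have h6 := hb0 x
      simp only [pow_zero, Finset.prod_const_one, abs_one, one_mul] at h6
      rw [pdL_eq] at h6
      exact h6.trans (rpow_neg_nat_mono hε hε1 (le_max_left _ _))
    have hbj' : ∀ j, (x j) ^ (2 * (d + 1)) * n ≤ ε ^ (-(Nmax : ℝ)) := by
      intro j
      have hP : (∏ i, (x i) ^ (if i = j then 2 * (d + 1) else 0)) = (x j) ^ (2 * (d + 1)) := by
        rw [Finset.prod_eq_single j (fun i _ hij => by simp [hij]) (by simp)]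
        simp
      have h7 := hbj j x
      rw [hP, pdL_eq] at h7
      have habs : |(x j) ^ (2 * (d + 1))| = (x j) ^ (2 * (d + 1)) := by
        apply _root_.abs_of_nonneg
        rw [pow_mul]
        positivity
      rw [habs] at h7
      refine h7.trans (rpow_neg_nat_mono hε hε1 ?_)
      exact le_max_of_le_right (Finset.le_sup (Finset.mem_univ j))
    calc ((1 + ‖x‖) ^ (2 * (d + 1))) * n
        ≤ ((2 * ((d : ℝ) + 1)) ^ (d + 1)) * ((1 + ∑ j, (x j) ^ (2 * (d + 1))) * n) := by
          have h8 : ((1 + ‖x‖) ^ (2 * (d + 1)) : ℝ)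
              ≤ (2 * ((d : ℝ) + 1)) ^ (d + 1) * (1 + ∑ j, (x j) ^ (2 * (d + 1))) := by
            refine e3.trans ?_
            calc (2 * (1 + ‖x‖ ^ 2) : ℝ) ^ (d + 1)
                = 2 ^ (d + 1) * (1 + ‖x‖ ^ 2) ^ (d + 1) := mul_pow _ _ _
              _ ≤ 2 ^ (d + 1) * (((d : ℝ) + 1) ^ (d + 1)
                    * (1 + ∑ j, (x j) ^ (2 * (d + 1)))) := by
                  exact mul_le_mul_of_nonneg_left e4 (by positivity)
              _ = (2 * ((d : ℝ) + 1)) ^ (d + 1) * (1 + ∑ j, (x j) ^ (2 * (d + 1))) := by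
                  rw [mul_pow]; ring
          calc ((1 + ‖x‖) ^ (2 * (d + 1))) * n
              ≤ ((2 * ((d : ℝ) + 1)) ^ (d + 1) * (1 + ∑ j, (x j) ^ (2 * (d + 1)))) * n :=
                mul_le_mul_of_nonneg_right h8 hn0
            _ = ((2 * ((d : ℝ) + 1)) ^ (d + 1)) * ((1 + ∑ j, (x j) ^ (2 * (d + 1))) * n) := by
                ring
      _ ≤ ((2 * ((d : ℝ) + 1)) ^ (d + 1)) * (((d : ℝ) + 1) * ε ^ (-(Nmax : ℝ))) := by
          refine mul_le_mul_of_nonneg_left ?_ (by positivity)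
          rw [add_mul, one_mul, Finset.sum_mul]
          calc n + ∑ j, (x j) ^ (2 * (d + 1)) * n
              ≤ ε ^ (-(Nmax : ℝ)) + ∑ _j : Fin d, ε ^ (-(Nmax : ℝ)) :=
                add_le_add hb0' (Finset.sum_le_sum (fun j _ => hbj' j))
            _ = ε ^ (-(Nmax : ℝ)) + (d : ℝ) * ε ^ (-(Nmax : ℝ)) := by
                rw [Finset.sum_const, Finset.card_univ, Fintype.card_fin, nsmul_eq_mul]
            _ = ((d : ℝ) + 1) * ε ^ (-(Nmax : ℝ)) := by ring
      _ = K * ε ^ (-(Nmax : ℝ)) := by rw [hK]; ring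
  have hpt : ∀ x : Eu d, ‖pdS L (v ε) x‖ ≤
      (K * ε ^ (-(Nmax : ℝ))) * ((1 + ‖x‖) ^ (2 * (d + 1)) : ℝ)⁻¹ := by
    intro x
    have hX : (0 : ℝ) < (1 + ‖x‖) ^ (2 * (d + 1)) := by positivity
    have h10 : ‖pdS L (v ε) x‖ * ((1 + ‖x‖) ^ (2 * (d + 1))) ≤ K * ε ^ (-(Nmax : ℝ)) := by
      rw [mul_comm]; exact hpt0 x
    have h11 := (le_div_iff₀ hX).2 h10
    rwa [div_eq_mul_inv] at h11
  have h9 : K * C ≤ ε⁻¹ := by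
    have h10 : ε * (K * C + 1) ≤ 1 := by
      calc ε * (K * C + 1) ≤ (K * C + 1)⁻¹ * (K * C + 1) :=
            mul_le_mul_of_nonneg_right hεK (by positivity)
        _ = 1 := inv_mul_cancel₀ (by positivity)
    have h11 : K * C + 1 ≤ ε⁻¹ := by
      rw [← mul_le_mul_iff_right₀ hε, mul_inv_cancel₀ hε.ne']
      exact h10
    linarith
  calc (∫ x : Eu d, ‖pdS L (v ε) x‖)
      ≤ ∫ x : Eu d, (K * ε ^ (-(Nmax : ℝ))) * ((1 + ‖x‖) ^ (2 * (d + 1)) : ℝ)⁻¹ :=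
        integral_mono ((pdS L (v ε)).integrable.norm) (hmaj.const_mul _) hpt
    _ = (K * ε ^ (-(Nmax : ℝ))) * C := by rw [integral_const_mul]
    _ = (K * C) * ε ^ (-(Nmax : ℝ)) := by ring
    _ ≤ ε⁻¹ * ε ^ (-(Nmax : ℝ)) := by
        exact mul_le_mul_of_nonneg_right h9 (Real.rpow_nonneg hε.le _)
    _ = ε ^ (-((Nmax : ℝ) + 1)) := by
        rw [← Real.rpow_neg_one ε, ← Real.rpow_add hε]
        ring_nf

lemma le_inv_of_le_inv' {a A : ℝ} (ha : 0 < a) (h : a ≤ A⁻¹) : A ≤ a⁻¹ := by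
  have h2 : 1 / A⁻¹ ≤ 1 / a := one_div_le_one_div_of_le ha h
  rwa [one_div, one_div, inv_inv] at h2

lemma decayJap (v : ℝ → SchwartzMap (Eu d) ℂ) (hv : SModNet v) (q : ℕ) :
    ∃ N : ℕ, SmallE fun ε => ∀ ξ : Eu d, jap ξ ^ q * ‖FT (⇑(v ε)) ξ‖ ≤ ε ^ (-(N : ℝ)) := by
  classical
  obtain ⟨N₀, h₀⟩ := L1_mod v hv []
  choose Nj hj using fun j : Fin d => L1_mod v hv (List.replicate (2 * q) j)
  set Nmax : ℕ := max N₀ (Finset.univ.sup Nj) with hNmax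
  refine ⟨Nmax + 1, ?_⟩
  obtain ⟨e, he, hall⟩ := smallE_and h₀ (smallE_forall_fintype hj)
  refine ⟨min (min e 1) (((d : ℝ) + 1) ^ (q + 1))⁻¹, lt_min (lt_min he one_pos) (by positivity),
    fun ε hε hε' ξ => ?_⟩
  have hεe : ε ≤ e := hε'.trans ((min_le_left _ _).trans (min_le_left _ _))
  have hε1 : ε ≤ 1 := hε'.trans ((min_le_left _ _).trans (min_le_right _ _))
  have hεd : ε ≤ (((d : ℝ) + 1) ^ (q + 1))⁻¹ := hε'.trans (min_le_right _ _)
  have hdinv : ((d : ℝ) + 1) ^ (q + 1) ≤ ε⁻¹ := le_inv_of_le_inv' hε hεd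
  obtain ⟨hb0, hbj⟩ := hall ε hε hεe
  have hcast : (-(((Nmax + 1 : ℕ)) : ℝ)) = -((Nmax : ℝ) + 1) := by push_cast; ring
  rw [hcast]
  set n : ℝ := ‖FT (⇑(v ε)) ξ‖ with hn
  have hn0 : 0 ≤ n := norm_nonneg _
  have hb0' : n ≤ ε ^ (-(Nmax : ℝ)) :=
    le_trans (norm_FT_le (⇑(v ε)) ξ)
      (le_trans hb0 (rpow_neg_nat_mono hε hε1 (le_max_left _ _)))
  have hbj' : ∀ j : Fin d, (ξ j) ^ (2 * q) * n ≤ ε ^ (-(Nmax : ℝ)) := by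
    intro j
    have h1 : ‖FT (⇑(pdS (List.replicate (2 * q) j) (v ε))) ξ‖ = |ξ j| ^ (2 * q) * n := by
      rw [FT_replicate, norm_mul, norm_pow, norm_mul, Complex.norm_I, one_mul,
        Complex.norm_real, Real.norm_eq_abs]
    have h2 : ‖FT (⇑(pdS (List.replicate (2 * q) j) (v ε))) ξ‖ ≤ ε ^ (-(Nmax : ℝ)) :=
      (norm_FT_le (⇑(pdS (List.replicate (2 * q) j) (v ε))) ξ).trans
      ((hbj j).trans (rpow_neg_nat_mono hε hε1
        (le_max_of_le_right (Finset.le_sup (f := Nj) (Finset.mem_univ j)))))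
    rw [h1] at h2
    have h3 : (ξ j) ^ (2 * q) ≤ |ξ j| ^ (2 * q) := by
      rw [pow_mul, pow_mul, _root_.sq_abs]
    exact le_trans (mul_le_mul_of_nonneg_right h3 hn0) h2
  have hjap1 : (1 : ℝ) ≤ jap ξ := by
    rw [jap]
    have h4 := Real.sqrt_le_sqrt (show (1:ℝ) ≤ 1 + ‖ξ‖ ^ 2 by nlinarith [sq_nonneg ‖ξ‖])
    rwa [Real.sqrt_one] at h4
  have hjap2 : jap ξ ^ 2 = 1 + ‖ξ‖ ^ 2 := Real.sq_sqrt (by positivity)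
  calc jap ξ ^ q * n
      ≤ jap ξ ^ (2 * q) * n :=
        mul_le_mul_of_nonneg_right (pow_le_pow_right₀ hjap1 (by omega)) hn0
    _ = (1 + ∑ j, (ξ j) ^ 2) ^ q * n := by rw [pow_mul, hjap2, norm_sq_eq]
    _ ≤ (((d : ℝ) + 1) ^ q * (1 + ∑ j, (ξ j) ^ (2 * q))) * n := by
        refine mul_le_mul_of_nonneg_right ?_ hn0
        have h5 := one_add_sum_pow_le (fun j => (ξ j) ^ 2) (fun j => sq_nonneg _) q
        simpa [← pow_mul] using h5
    _ = ((d : ℝ) + 1) ^ q * (n + ∑ j, (ξ j) ^ (2 * q) * n) := by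
        rw [mul_assoc, add_mul, one_mul, Finset.sum_mul]
    _ ≤ ((d : ℝ) + 1) ^ q * (ε ^ (-(Nmax : ℝ)) + ∑ _j : Fin d, ε ^ (-(Nmax : ℝ))) :=
        mul_le_mul_of_nonneg_left
          (add_le_add hb0' (Finset.sum_le_sum (fun j _ => hbj' j))) (by positivity)
    _ = ((d : ℝ) + 1) ^ (q + 1) * ε ^ (-(Nmax : ℝ)) := by
        rw [Finset.sum_const, Finset.card_univ, Fintype.card_fin, nsmul_eq_mul, pow_succ]; ring
    _ ≤ ε⁻¹ * ε ^ (-(Nmax : ℝ)) :=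
        mul_le_mul_of_nonneg_right hdinv (Real.rpow_nonneg hε.le _)
    _ = ε ^ (-((Nmax : ℝ) + 1)) := by
        rw [← Real.rpow_neg_one ε, ← Real.rpow_add hε]; ring_nf

end Stmt1Aux

namespace Stmt1Aux

variable {d : ℕ}

lemma one_le_rpow_neg {ε : ℝ} (hε : 0 < ε) (hε1 : ε ≤ 1) {a : ℝ} (ha : 0 ≤ a) :
    1 ≤ ε ^ (-a) :=
  Real.one_le_rpow_of_pos_of_le_one_of_nonpos hε hε1 (neg_nonpos.2 ha)

lemma le_of_sq_le_sq' {a b : ℝ} (ha : 0 ≤ a) (hb : 0 ≤ b) (h : a ^ 2 ≤ b ^ 2) : a ≤ b := by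
  nlinarith

lemma norm_le_jap (ξ : Eu d) : ‖ξ‖ ≤ jap ξ := by
  rw [jap]
  have h := Real.sqrt_le_sqrt (show ‖ξ‖ ^ 2 ≤ 1 + ‖ξ‖ ^ 2 by linarith)
  rwa [Real.sqrt_sq (norm_nonneg ξ)] at h

lemma one_le_jap (ξ : Eu d) : (1 : ℝ) ≤ jap ξ := by
  rw [jap]
  have h := Real.sqrt_le_sqrt (show (1 : ℝ) ≤ 1 + ‖ξ‖ ^ 2 by nlinarith [sq_nonneg ‖ξ‖])
  rwa [Real.sqrt_one] at h

lemma jap_sq (ξ : Eu d) : jap ξ ^ 2 = 1 + ‖ξ‖ ^ 2 := Real.sq_sqrt (by positivity)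

lemma imp43 (v : ℝ → SchwartzMap (Eu d) ℂ) (ξ₀ : ℝ → Eu d)
    (h4 : ∃ N : ℕ, ∀ m : ℕ, 1 ≤ m → SmallE fun ε => ∀ ξ : Eu d, ξ ≠ 0 →
        ‖‖ξ‖⁻¹ • ξ - ξ₀ ε‖ ≤ ε ^ (1 / (m : ℝ)) →
        jap ξ ^ m * ‖FT (⇑(v ε)) ξ‖ ≤ ε ^ (-(N : ℝ))) :
    ∀ m : ℕ, 1 ≤ m → SmallE fun ε => ∀ ξ : Eu d,
        ε ^ (-(1 / (m : ℝ))) ≤ ‖ξ‖ → ‖‖ξ‖⁻¹ • ξ - ξ₀ ε‖ ≤ ε ^ (1 / (m : ℝ)) →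
        ‖FT (⇑(v ε)) ξ‖ ≤ ε ^ (m : ℝ) := by
  obtain ⟨N, h4⟩ := h4
  intro m hm
  have hM1 : 1 ≤ m * (N + m) := Nat.one_le_iff_ne_zero.mpr
    (Nat.mul_ne_zero (by omega) (by omega))
  obtain ⟨e, he, h⟩ := h4 (m * (N + m)) hM1
  refine ⟨min e 1, lt_min he one_pos, fun ε hε hε' ξ hbig hdir => ?_⟩
  have hεe : ε ≤ e := hε'.trans (min_le_left _ _)
  have hε1 : ε ≤ 1 := hε'.trans (min_le_right _ _)
  have hξ0 : ξ ≠ 0 := by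
    intro h0
    rw [h0, norm_zero] at hbig
    exact absurd hbig (not_le.2 (Real.rpow_pos_of_pos hε _))
  have hm0 : (m : ℝ) ≠ 0 := Nat.cast_ne_zero.2 (by omega)
  have hM0 : ((m * (N + m) : ℕ) : ℝ) ≠ 0 := Nat.cast_ne_zero.2 (by omega)
  have hinv : 1 / ((m * (N + m) : ℕ) : ℝ) ≤ 1 / (m : ℝ) := by
    apply one_div_le_one_div_of_le
    · exact_mod_cast Nat.pos_of_ne_zero (by omega)
    · exact_mod_cast Nat.le_mul_of_pos_right m (by omega)
  have hdir' : ‖‖ξ‖⁻¹ • ξ - ξ₀ ε‖ ≤ ε ^ (1 / ((m * (N + m) : ℕ) : ℝ)) :=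
    hdir.trans (rpow_mono hε hε1 hinv)
  have hj := h ε hε hεe ξ hξ0 hdir'
  have hjap : ε ^ (-(1 / (m : ℝ))) ≤ jap ξ := hbig.trans (norm_le_jap ξ)
  have hpow : ε ^ (-((N : ℝ) + m)) ≤ jap ξ ^ (m * (N + m)) := by
    calc ε ^ (-((N : ℝ) + m)) = (ε ^ (-(1 / (m : ℝ)))) ^ (m * (N + m)) := by
          rw [← Real.rpow_natCast (ε ^ (-(1 / (m : ℝ)))) (m * (N + m)), ← Real.rpow_mul hε.le]
          congr 1
          push_cast
          field_simp
      _ ≤ jap ξ ^ (m * (N + m)) :=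
          pow_le_pow_left₀ (Real.rpow_nonneg hε.le _) hjap _
  have h5 : ε ^ (-((N : ℝ) + m)) * ‖FT (⇑(v ε)) ξ‖ ≤ ε ^ (-(N : ℝ)) :=
    le_trans (mul_le_mul_of_nonneg_right hpow (norm_nonneg _)) hj
  have h6 := mul_le_mul_of_nonneg_left h5 (Real.rpow_nonneg hε.le ((N : ℝ) + m))
  rw [← mul_assoc, ← Real.rpow_add hε, ← Real.rpow_add hε] at h6
  rw [show (N : ℝ) + (m : ℝ) + -((N : ℝ) + (m : ℝ)) = 0 by ring, Real.rpow_zero, one_mul,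
    show (N : ℝ) + (m : ℝ) + -(N : ℝ) = (m : ℝ) by ring] at h6
  exact h6

lemma imp34 (v : ℝ → SchwartzMap (Eu d) ℂ) (hv : SModNet v) (ξ₀ : ℝ → Eu d)
    (h3 : ∀ m : ℕ, 1 ≤ m → SmallE fun ε => ∀ ξ : Eu d,
        ε ^ (-(1 / (m : ℝ))) ≤ ‖ξ‖ → ‖‖ξ‖⁻¹ • ξ - ξ₀ ε‖ ≤ ε ^ (1 / (m : ℝ)) →
        ‖FT (⇑(v ε)) ξ‖ ≤ ε ^ (m : ℝ)) :
    ∃ N : ℕ, ∀ m : ℕ, 1 ≤ m → SmallE fun ε => ∀ ξ : Eu d, ξ ≠ 0 →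
        ‖‖ξ‖⁻¹ • ξ - ξ₀ ε‖ ≤ ε ^ (1 / (m : ℝ)) →
        jap ξ ^ m * ‖FT (⇑(v ε)) ξ‖ ≤ ε ^ (-(N : ℝ)) := by
  obtain ⟨N₀, hD0⟩ := decayJap v hv 0
  refine ⟨N₀ + 2, fun m hm => ?_⟩
  obtain ⟨N₂, hD2⟩ := decayJap v hv (2 * m)
  obtain ⟨e3, he3, h3M⟩ := h3 (m + N₂) (by omega)
  obtain ⟨e0, he0, h0⟩ := hD0
  obtain ⟨e2, he2, h2⟩ := hD2
  refine ⟨min (min e0 e2) (min e3 (min 1 ((2 : ℝ) ^ m)⁻¹)), by positivity,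
    fun ε hε hε' ξ hξ0 hdir => ?_⟩
  have hεe0 : ε ≤ e0 := hε'.trans ((min_le_left _ _).trans (min_le_left _ _))
  have hεe2 : ε ≤ e2 := hε'.trans ((min_le_left _ _).trans (min_le_right _ _))
  have hεe3 : ε ≤ e3 := hε'.trans ((min_le_right _ _).trans (min_le_left _ _))
  have hε1 : ε ≤ 1 := hε'.trans
    ((min_le_right _ _).trans ((min_le_right _ _).trans (min_le_left _ _)))
  have hε2m : ε ≤ ((2 : ℝ) ^ m)⁻¹ := hε'.trans
    ((min_le_right _ _).trans ((min_le_right _ _).trans (min_le_right _ _)))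
  have h2m : (2 : ℝ) ^ m ≤ ε⁻¹ := le_inv_of_le_inv' hε hε2m
  have hm0 : (m : ℝ) ≠ 0 := Nat.cast_ne_zero.2 (by omega)
  have hFT0 : ‖FT (⇑(v ε)) ξ‖ ≤ ε ^ (-(N₀ : ℝ)) := by
    have := h0 ε hε hεe0 ξ
    simpa using this
  set n : ℝ := ‖FT (⇑(v ε)) ξ‖ with hn
  have hn0 : 0 ≤ n := norm_nonneg _
  have hcast : (-(((N₀ + 2 : ℕ)) : ℝ)) = -((N₀ : ℝ) + 2) := by push_cast; ring
  rw [hcast]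
  have hb0 : (1 : ℝ) ≤ ε ^ (-((N₀ : ℝ) + 2)) := one_le_rpow_neg hε hε1 (by positivity)
  by_cases hbig : ε ^ (-(1 / (m : ℝ))) ≤ ‖ξ‖
  · -- interpolation case
    have hmN : (1 : ℝ) / ((m + N₂ : ℕ) : ℝ) ≤ 1 / (m : ℝ) := by
      apply one_div_le_one_div_of_le
      · exact_mod_cast Nat.pos_of_ne_zero (by omega)
      · exact_mod_cast Nat.le_add_right m N₂
    have hdir' : ‖‖ξ‖⁻¹ • ξ - ξ₀ ε‖ ≤ ε ^ (1 / ((m + N₂ : ℕ) : ℝ)) :=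
      hdir.trans (rpow_mono hε hε1 hmN)
    have hbig' : ε ^ (-(1 / ((m + N₂ : ℕ) : ℝ))) ≤ ‖ξ‖ :=
      le_trans (rpow_mono hε hε1 (neg_le_neg hmN)) hbig
    have hFTm : n ≤ ε ^ (((m + N₂ : ℕ)) : ℝ) := h3M ε hε hεe3 ξ hbig' hdir'
    have hj2 : jap ξ ^ (2 * m) * n ≤ ε ^ (-(N₂ : ℝ)) := h2 ε hε hεe2 ξ
    have hsq : (jap ξ ^ m * n) ^ 2 ≤ 1 := by
      have e1 : (jap ξ ^ m * n) ^ 2 = (jap ξ ^ (2 * m) * n) * n := by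
        rw [mul_pow, ← pow_mul, mul_comm m 2]
        ring
      rw [e1]
      calc (jap ξ ^ (2 * m) * n) * n ≤ ε ^ (-(N₂ : ℝ)) * ε ^ (((m + N₂ : ℕ)) : ℝ) :=
            mul_le_mul hj2 hFTm hn0 (Real.rpow_nonneg hε.le _)
        _ = ε ^ ((m : ℝ)) := by
            rw [← Real.rpow_add hε]
            congr 1
            push_cast
            ring
        _ ≤ 1 := Real.rpow_le_one hε.le hε1 (by positivity)
    have hle1 : jap ξ ^ m * n ≤ 1 := by
      refine le_of_sq_le_sq' (mul_nonneg (pow_nonneg (le_trans zero_le_one (one_le_jap ξ)) m) hn0)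
        one_pos.le (by simpa using hsq)
    exact hle1.trans hb0
  · push_neg at hbig
    have hj2' : jap ξ ^ 2 ≤ 2 * ε ^ (-(2 / (m : ℝ))) := by
      rw [jap_sq]
      have hn2 : ‖ξ‖ ^ 2 ≤ (ε ^ (-(1 / (m : ℝ)))) ^ 2 :=
        pow_le_pow_left₀ (norm_nonneg _) hbig.le 2
      have he2' : (ε ^ (-(1 / (m : ℝ)))) ^ 2 = ε ^ (-(2 / (m : ℝ))) := by
        rw [← Real.rpow_natCast (ε ^ (-(1 / (m : ℝ)))) 2, ← Real.rpow_mul hε.le]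
        congr 1
        push_cast
        ring
      have h1le : (1 : ℝ) ≤ ε ^ (-(2 / (m : ℝ))) := one_le_rpow_neg hε hε1 (by positivity)
      rw [he2'] at hn2
      linarith
    have hj2m : jap ξ ^ (2 * m) ≤ (2 : ℝ) ^ m * ε ^ (-(2 : ℝ)) := by
      calc jap ξ ^ (2 * m) = (jap ξ ^ 2) ^ m := by rw [← pow_mul]
        _ ≤ (2 * ε ^ (-(2 / (m : ℝ)))) ^ m :=
            pow_le_pow_left₀ (by positivity) hj2' m
        _ = 2 ^ m * (ε ^ (-(2 / (m : ℝ)))) ^ m := mul_pow _ _ _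
        _ = 2 ^ m * ε ^ (-(2 : ℝ)) := by
            rw [← Real.rpow_natCast (ε ^ (-(2 / (m : ℝ)))) m, ← Real.rpow_mul hε.le]
            congr 2
            field_simp
    have hsq2 : (jap ξ ^ m * n) ^ 2 ≤ (ε ^ (-((N₀ : ℝ) + 2))) ^ 2 := by
      have e1 : (jap ξ ^ m * n) ^ 2 = jap ξ ^ (2 * m) * n ^ 2 := by
        rw [mul_pow, ← pow_mul, mul_comm m 2]
      rw [e1]
      have hnn : n ^ 2 ≤ (ε ^ (-(N₀ : ℝ))) ^ 2 := pow_le_pow_left₀ hn0 hFT0 2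
      calc jap ξ ^ (2 * m) * n ^ 2
          ≤ ((2 : ℝ) ^ m * ε ^ (-(2 : ℝ))) * (ε ^ (-(N₀ : ℝ))) ^ 2 :=
            mul_le_mul hj2m hnn (by positivity) (by positivity)
        _ ≤ (ε⁻¹ * ε ^ (-(2 : ℝ))) * (ε ^ (-(N₀ : ℝ))) ^ 2 := by
            refine mul_le_mul_of_nonneg_right
              (mul_le_mul_of_nonneg_right h2m (by positivity)) (by positivity)
        _ ≤ (ε ^ (-((N₀ : ℝ) + 2))) ^ 2 := by
            rw [← Real.rpow_neg_one ε, ← Real.rpow_add hε,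
              ← Real.rpow_natCast (ε ^ (-(N₀ : ℝ))) 2, ← Real.rpow_mul hε.le,
              ← Real.rpow_add hε,
              ← Real.rpow_natCast (ε ^ (-((N₀ : ℝ) + 2))) 2, ← Real.rpow_mul hε.le]
            apply rpow_mono hε hε1
            push_cast
            ring_nf
            linarith
    exact le_of_sq_le_sq' (mul_nonneg (pow_nonneg (le_trans zero_le_one (one_le_jap ξ)) m) hn0)
      (Real.rpow_nonneg hε.le _) hsq2


lemma negNet_zero : NegNet (fun _ : ℝ => (0 : ℝ)) := fun m =>
  ⟨1, one_pos, fun ε hε _ => by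
    simp only [norm_zero]
    exact Real.rpow_nonneg hε.le _⟩

lemma imp12 (v : ℝ → SchwartzMap (Eu d) ℂ) (ξ₀ : ℝ → Eu d)
    (hξ₀ : ∀ ε : ℝ, 0 < ε → ε ≤ 1 → ‖ξ₀ ε‖ = 1)
    (h1 : ∃ r R : ℝ → ℝ, SlowInfPos r ∧ SlowScalePos R ∧
        ∀ ξ : ℝ → Eu d, ModNet ξ → (∀ ε : ℝ, 0 < ε → ε ≤ 1 → ξ ε ≠ 0) →
          (∃ n n' : ℝ → ℝ, NegNet n ∧ NegNet n' ∧ SmallE fun ε =>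
            ‖‖ξ ε‖⁻¹ • ξ ε - ξ₀ ε‖ ≤ r ε + n ε ∧ R ε - n' ε ≤ ‖ξ ε‖) →
          NegNet fun ε => FT (⇑(v ε)) (ξ ε)) :
    ∀ ξ : ℝ → Eu d, ModNet ξ → FastScale ξ →
        FastInf (fun ε => ‖ξ ε‖⁻¹ • ξ ε - ξ₀ ε) →
        NegNet fun ε => FT (⇑(v ε)) (ξ ε) := by
  classical
  obtain ⟨r, R, hr, hR, h⟩ := h1
  intro ξ hmod hfast hinf
  obtain ⟨a, ha, ea, hea, hfa⟩ := hfast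
  obtain ⟨b, hb, eb, heb, hfb⟩ := hinf
  set ξ' : ℝ → Eu d := fun ε => if ξ ε = 0 then ξ₀ ε else ξ ε with hξ'
  have hξne : ∀ ε : ℝ, 0 < ε → ε ≤ ea → ξ ε ≠ 0 := by
    intro ε hε hε' h0
    have h2 : ε ^ (-a) ≤ ‖ξ ε‖ := hfa ε hε hε'
    rw [h0, norm_zero] at h2
    exact absurd h2 (not_le.2 (Real.rpow_pos_of_pos hε _))
  have heq : ∀ ε : ℝ, 0 < ε → ε ≤ ea → ξ' ε = ξ ε := by
    intro ε hε hε'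
    simp only [hξ', if_neg (hξne ε hε hε')]
  have hne : ∀ ε : ℝ, 0 < ε → ε ≤ 1 → ξ' ε ≠ 0 := by
    intro ε hε hε1
    by_cases h0 : ξ ε = 0
    · simp only [hξ', if_pos h0]
      intro hc
      have h2 := hξ₀ ε hε hε1
      rw [hc, norm_zero] at h2
      norm_num at h2
    · simp only [hξ', if_neg h0]
      exact h0
  have hNeg : NegNet fun ε => FT (⇑(v ε)) (ξ' ε) := by
    refine h ξ' ?_ hne ?_
    · obtain ⟨N, eN, heN, hN⟩ := hmod
      refine ⟨N, min eN ea, lt_min heN hea, fun ε hε hε' => ?_⟩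
      show ‖ξ' ε‖ ≤ ε ^ (-(N : ℝ))
      rw [heq ε hε (hε'.trans (min_le_right _ _))]
      exact hN ε hε (hε'.trans (min_le_left _ _))
    · refine ⟨fun _ => 0, fun _ => 0, negNet_zero, negNet_zero, ?_⟩
      obtain ⟨er, her, hrr⟩ := hr.2 b hb
      obtain ⟨eR, heR, hRR⟩ := hR.2 a ha
      refine ⟨min (min ea eb) (min er eR), lt_min (lt_min hea heb) (lt_min her heR),
        fun ε hε hε' => ?_⟩
      have hεa : ε ≤ ea := hε'.trans ((min_le_left _ _).trans (min_le_left _ _))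
      have hεb : ε ≤ eb := hε'.trans ((min_le_left _ _).trans (min_le_right _ _))
      have hεr : ε ≤ er := hε'.trans ((min_le_right _ _).trans (min_le_left _ _))
      have hεR : ε ≤ eR := hε'.trans ((min_le_right _ _).trans (min_le_right _ _))
      show ‖‖ξ' ε‖⁻¹ • ξ' ε - ξ₀ ε‖ ≤ r ε + 0 ∧ R ε - 0 ≤ ‖ξ' ε‖
      rw [heq ε hε hεa]
      constructor
      · rw [add_zero]
        exact le_trans (hfb ε hε hεb) (hrr ε hε hεr).1
      · rw [sub_zero]
        exact le_trans (hRR ε hε hεR) (hfa ε hε hεa)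
  intro m
  obtain ⟨em, hem, hm⟩ := hNeg m
  refine ⟨min em ea, lt_min hem hea, fun ε hε hε' => ?_⟩
  have h2 : ‖FT (⇑(v ε)) (ξ' ε)‖ ≤ ε ^ ((m : ℕ) : ℝ) := hm ε hε (hε'.trans (min_le_left _ _))
  show ‖FT (⇑(v ε)) (ξ ε)‖ ≤ ε ^ ((m : ℕ) : ℝ)
  rwa [heq ε hε (hε'.trans (min_le_right _ _))] at h2

lemma imp23 (v : ℝ → SchwartzMap (Eu d) ℂ) (hv : SModNet v) (ξ₀ : ℝ → Eu d)
    (hξ₀ : ∀ ε : ℝ, 0 < ε → ε ≤ 1 → ‖ξ₀ ε‖ = 1)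
    (h2 : ∀ ξ : ℝ → Eu d, ModNet ξ → FastScale ξ →
        FastInf (fun ε => ‖ξ ε‖⁻¹ • ξ ε - ξ₀ ε) →
        NegNet fun ε => FT (⇑(v ε)) (ξ ε)) :
    ∀ m : ℕ, 1 ≤ m → SmallE fun ε => ∀ ξ : Eu d,
        ε ^ (-(1 / (m : ℝ))) ≤ ‖ξ‖ → ‖‖ξ‖⁻¹ • ξ - ξ₀ ε‖ ≤ ε ^ (1 / (m : ℝ)) →
        ‖FT (⇑(v ε)) ξ‖ ≤ ε ^ (m : ℝ) := by
  classical
  intro m hm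
  by_contra hc
  obtain ⟨N₁, e₁, he₁, hD₁⟩ := decayJap v hv 1
  set Q : ℝ → Prop := fun ε => ∃ ξ : Eu d, ε ^ (-(1 / (m : ℝ))) ≤ ‖ξ‖ ∧
    ‖‖ξ‖⁻¹ • ξ - ξ₀ ε‖ ≤ ε ^ (1 / (m : ℝ)) ∧ ¬ ‖FT (⇑(v ε)) ξ‖ ≤ ε ^ (m : ℝ) with hQdef
  set ξn : ℝ → Eu d := fun ε =>
    if h : Q ε then h.choose else (ε ^ (-(1 / (m : ℝ)))) • ξ₀ ε with hξn
  have hQspec : ∀ ε : ℝ, (h : Q ε) → ε ^ (-(1 / (m : ℝ))) ≤ ‖ξn ε‖ ∧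
      ‖‖ξn ε‖⁻¹ • ξn ε - ξ₀ ε‖ ≤ ε ^ (1 / (m : ℝ)) ∧
      ¬ ‖FT (⇑(v ε)) (ξn ε)‖ ≤ ε ^ (m : ℝ) := by
    intro ε h
    have : ξn ε = h.choose := by simp only [hξn, dif_pos h]
    rw [this]
    exact h.choose_spec
  have hfall : ∀ ε : ℝ, 0 < ε → ε ≤ 1 → ¬ Q ε →
      ‖ξn ε‖ = ε ^ (-(1 / (m : ℝ))) ∧ ‖ξn ε‖⁻¹ • ξn ε - ξ₀ ε = 0 := by
    intro ε hε hε1 hq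
    have hx : ξn ε = (ε ^ (-(1 / (m : ℝ)))) • ξ₀ ε := by simp only [hξn, dif_neg hq]
    have hpos : (0 : ℝ) < ε ^ (-(1 / (m : ℝ))) := Real.rpow_pos_of_pos hε _
    have hnorm : ‖ξn ε‖ = ε ^ (-(1 / (m : ℝ))) := by
      rw [hx, norm_smul, Real.norm_eq_abs, abs_of_pos hpos, hξ₀ ε hε hε1, mul_one]
    refine ⟨hnorm, ?_⟩
    rw [hnorm, hx, smul_smul, inv_mul_cancel₀ hpos.ne', one_smul, sub_self]
  have hlow : ∀ ε : ℝ, 0 < ε → ε ≤ 1 → ε ^ (-(1 / (m : ℝ))) ≤ ‖ξn ε‖ := by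
    intro ε hε hε1
    by_cases hq : Q ε
    · exact (hQspec ε hq).1
    · exact ((hfall ε hε hε1 hq).1).ge
  have hdir : ∀ ε : ℝ, 0 < ε → ε ≤ 1 → ‖‖ξn ε‖⁻¹ • ξn ε - ξ₀ ε‖ ≤ ε ^ (1 / (m : ℝ)) := by
    intro ε hε hε1
    by_cases hq : Q ε
    · exact (hQspec ε hq).2.1
    · rw [(hfall ε hε hε1 hq).2, norm_zero]
      exact Real.rpow_nonneg hε.le _
  have hmod : ModNet ξn := by
    refine ⟨N₁ + m + 1, min e₁ 1, lt_min he₁ one_pos, fun ε hε hε' => ?_⟩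
    have hεe₁ : ε ≤ e₁ := hε'.trans (min_le_left _ _)
    have hε1 : ε ≤ 1 := hε'.trans (min_le_right _ _)
    show ‖ξn ε‖ ≤ ε ^ (-((N₁ + m + 1 : ℕ) : ℝ))
    by_cases hq : Q ε
    · obtain ⟨h1, h2', h3⟩ := hQspec ε hq
      push_neg at h3
      have hD := hD₁ ε hε hεe₁ (ξn ε)
      rw [pow_one] at hD
      have hFTpos : (0 : ℝ) < ‖FT (⇑(v ε)) (ξn ε)‖ :=
        lt_of_le_of_lt (Real.rpow_nonneg hε.le _) h3
      have hjb : ‖ξn ε‖ ≤ jap (ξn ε) := norm_le_jap _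
      have h4 : ‖ξn ε‖ * ε ^ ((m : ℕ) : ℝ) ≤ ε ^ (-(N₁ : ℝ)) := by
        calc ‖ξn ε‖ * ε ^ ((m : ℕ) : ℝ) ≤ jap (ξn ε) * ‖FT (⇑(v ε)) (ξn ε)‖ :=
              mul_le_mul hjb h3.le (Real.rpow_nonneg hε.le _)
                (le_trans (norm_nonneg _) hjb)
          _ ≤ ε ^ (-(N₁ : ℝ)) := hD
      have h5 : ‖ξn ε‖ ≤ ε ^ (-(N₁ : ℝ)) * ε ^ (-((m : ℕ) : ℝ)) := by
        have h6 := mul_le_mul_of_nonneg_right h4 (Real.rpow_nonneg hε.le (-((m : ℕ) : ℝ)))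
        rw [mul_assoc, ← Real.rpow_add hε, add_neg_cancel, Real.rpow_zero, mul_one] at h6
        exact h6
      refine h5.trans ?_
      rw [← Real.rpow_add hε]
      apply rpow_mono hε hε1
      push_cast
      linarith
    · rw [(hfall ε hε hε1 hq).1]
      apply rpow_mono hε hε1
      have hm1 : (1 : ℝ) ≤ (m : ℝ) := by exact_mod_cast hm
      have : 1 / (m : ℝ) ≤ 1 := by
        rw [div_le_one (by linarith)]
        exact hm1
      push_cast
      nlinarith [Nat.cast_nonneg (α := ℝ) N₁]
  have hfastS : FastScale ξn := ⟨1 / (m : ℝ), by positivity, 1, one_pos, hlow⟩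
  have hfastI : FastInf (fun ε => ‖ξn ε‖⁻¹ • ξn ε - ξ₀ ε) :=
    ⟨1 / (m : ℝ), by positivity, 1, one_pos, hdir⟩
  obtain ⟨e', he', hneg'⟩ := h2 ξn hmod hfastS hfastI (m + 1)
  apply hc
  refine ⟨min e' 1, lt_min he' one_pos, fun ε hε hε' ξ hb1 hb2 => ?_⟩
  by_contra hbad
  have hQε : Q ε := ⟨ξ, hb1, hb2, hbad⟩
  have h5 := hneg' ε hε (hε'.trans (min_le_left _ _))
  have hε1 : ε ≤ 1 := hε'.trans (min_le_right _ _)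
  have h6 : ‖FT (⇑(v ε)) (ξn ε)‖ ≤ ε ^ ((m : ℕ) : ℝ) := by
    refine h5.trans (rpow_mono hε hε1 ?_)
    push_cast
    linarith
  exact (hQspec ε hQε).2.2 h6


lemma imp31 (v : ℝ → SchwartzMap (Eu d) ℂ) (ξ₀ : ℝ → Eu d)
    (h3 : ∀ m : ℕ, 1 ≤ m → SmallE fun ε => ∀ ξ : Eu d,
        ε ^ (-(1 / (m : ℝ))) ≤ ‖ξ‖ → ‖‖ξ‖⁻¹ • ξ - ξ₀ ε‖ ≤ ε ^ (1 / (m : ℝ)) →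
        ‖FT (⇑(v ε)) ξ‖ ≤ ε ^ (m : ℝ)) :
    ∃ r R : ℝ → ℝ, SlowInfPos r ∧ SlowScalePos R ∧
        ∀ ξ : ℝ → Eu d, ModNet ξ → (∀ ε : ℝ, 0 < ε → ε ≤ 1 → ξ ε ≠ 0) →
          (∃ n n' : ℝ → ℝ, NegNet n ∧ NegNet n' ∧ SmallE fun ε =>
            ‖‖ξ ε‖⁻¹ • ξ ε - ξ₀ ε‖ ≤ r ε + n ε ∧ R ε - n' ε ≤ ‖ξ ε‖) →
          NegNet fun ε => FT (⇑(v ε)) (ξ ε) := by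
  classical
  have H : ∀ k : ℕ, ∃ e : ℝ, 0 < e ∧ (1 ≤ k → ∀ ε : ℝ, 0 < ε → ε ≤ e → ∀ ξ : Eu d,
      ε ^ (-(1 / (k : ℝ))) ≤ ‖ξ‖ → ‖‖ξ‖⁻¹ • ξ - ξ₀ ε‖ ≤ ε ^ (1 / (k : ℝ)) →
      ‖FT (⇑(v ε)) ξ‖ ≤ ε ^ (k : ℝ)) := by
    intro k
    by_cases hk : 1 ≤ k
    · obtain ⟨e, he, h⟩ := h3 k hk
      exact ⟨e, he, fun _ => h⟩
    · exact ⟨1, one_pos, fun h => absurd h hk⟩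
  choose t ht hT using H
  set δ : ℕ → ℝ := fun k => Nat.rec (1 : ℝ)
      (fun k ih => min (min (ih / 2) (t (k + 1))) (((k : ℝ) + 1) ^ (-((k : ℝ) + 1)))) k
    with hδdef
  have hδ0 : δ 0 = 1 := rfl
  have hδsucc : ∀ k, δ (k + 1)
      = min (min (δ k / 2) (t (k + 1))) (((k : ℝ) + 1) ^ (-((k : ℝ) + 1))) := fun k => rfl
  have hδpos : ∀ k, 0 < δ k := by
    intro k
    induction k with
    | zero => rw [hδ0]; norm_num
    | succ k ih =>
      rw [hδsucc]
      refine lt_min (lt_min (by linarith) (ht _)) ?_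
      apply Real.rpow_pos_of_pos
      positivity
  have hδanti : ∀ j k : ℕ, j ≤ k → δ k ≤ δ j := by
    have hstep : ∀ k, δ (k + 1) ≤ δ k := by
      intro k
      rw [hδsucc]
      exact le_trans (min_le_left _ _) (le_trans (min_le_left _ _) (by linarith [hδpos k]))
    intro j k h
    exact antitone_nat_of_succ_le hstep h
  have hδt : ∀ k : ℕ, 1 ≤ k → δ k ≤ t k := by
    intro k hk
    cases k with
    | zero => omega
    | succ k => rw [hδsucc]; exact le_trans (min_le_left _ _) (min_le_right _ _)
  have hδpow : ∀ k : ℕ, δ (k + 1) ≤ (((k : ℝ) + 1)) ^ (-((k : ℝ) + 1)) := by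
    intro k
    rw [hδsucc]
    exact min_le_right _ _
  have hδ1le : δ 1 ≤ 1 := le_trans (hδanti 0 1 (by omega)) (le_of_eq hδ0)
  have hex : ∀ ε : ℝ, 0 < ε → ∃ k, δ k < ε := by
    intro ε hε
    obtain ⟨n, hn⟩ := exists_nat_one_div_lt hε
    refine ⟨n + 1, lt_of_le_of_lt (le_trans (hδpow n) ?_) hn⟩
    have h1 : (1 : ℝ) ≤ (n : ℝ) + 1 := by linarith [Nat.cast_nonneg (α := ℝ) n]
    have h2 := Real.rpow_le_rpow_of_exponent_le h1
      (show -((n : ℝ) + 1) ≤ -1 by push_cast; linarith [Nat.cast_nonneg (α := ℝ) n])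
    rw [Real.rpow_neg_one] at h2
    rw [one_div]
    exact h2
  set mf : ℝ → ℕ := fun ε => (if h : ∃ k, δ k < ε then Nat.find h else 0) - 1 with hmf
  -- key facts about mf for 0 < ε ≤ δ 1
  have hmf1 : ∀ ε : ℝ, 0 < ε → ε ≤ δ 1 → 1 ≤ mf ε ∧ ε ≤ δ (mf ε) := by
    intro ε hε hε1
    have hh := hex ε hε
    have hfind : (if h : ∃ k, δ k < ε then Nat.find h else 0) = Nat.find hh := dif_pos hh
    have h2 : 2 ≤ Nat.find hh := by
      rw [show (2 : ℕ) = 1 + 1 from rfl, ← Nat.lt_iff_add_one_le, Nat.lt_find_iff hh 1]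
      intro j hj
      interval_cases j
      · rw [hδ0]; push_neg; exact hε1.trans hδ1le
      · push_neg; exact hε1
    have h3 : ε ≤ δ (Nat.find hh - 1) :=
      not_lt.1 (Nat.find_min hh (show Nat.find hh - 1 < Nat.find hh by omega))
    simp only [hmf]
    simp only [hfind]
    exact ⟨by omega, h3⟩
  have hmfge : ∀ (M : ℕ) (ε : ℝ), 0 < ε → ε ≤ δ M → M ≤ mf ε := by
    intro M ε hε hεM
    have hh := hex ε hε
    have hfind : (if h : ∃ k, δ k < ε then Nat.find h else 0) = Nat.find hh := dif_pos hh
    have h2 : M < Nat.find hh := by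
      by_contra hcon
      push_neg at hcon
      have h5 : ε < ε := lt_of_le_of_lt (hεM.trans (hδanti _ _ hcon)) (Nat.find_spec hh)
      exact absurd h5 (lt_irrefl ε)
    simp only [hmf]
    simp only [hfind]
    omega
  -- upper estimate ε^{1/mf ε} ≤ 1/mf ε
  have hupper : ∀ ε : ℝ, 0 < ε → ε ≤ δ 1 → ε ^ (1 / (mf ε : ℝ)) ≤ 1 / (mf ε : ℝ) := by
    intro ε hε hε1
    obtain ⟨hk1, hεδk⟩ := hmf1 ε hε hε1
    set k := mf ε
    have hk0 : (0 : ℝ) < (k : ℝ) := by exact_mod_cast hk1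
    obtain ⟨j, hj⟩ := Nat.exists_eq_add_of_le hk1
    have hδkej : δ k ≤ ((k : ℝ)) ^ (-(k : ℝ)) := by
      have := hδpow j
      rw [show j + 1 = k by omega] at this
      have hcast : ((j : ℝ) + 1) = (k : ℝ) := by
        have : k = j + 1 := by omega
        rw [this]
        push_cast
        ring
      rwa [hcast] at this
    have h4 : ε ^ (1 / (k : ℝ)) ≤ (((k : ℝ)) ^ (-(k : ℝ))) ^ (1 / (k : ℝ)) :=
      Real.rpow_le_rpow hε.le (hεδk.trans hδkej) (by positivity)
    refine h4.trans (le_of_eq ?_)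
    rw [← Real.rpow_mul hk0.le]
    rw [show -(k : ℝ) * (1 / (k : ℝ)) = -1 by field_simp]
    rw [Real.rpow_neg_one, one_div]
  set r : ℝ → ℝ := fun ε => if ε ≤ δ 1 then ε ^ (1 / (mf ε : ℝ)) / 2 else ε / 2 with hrdef
  set R : ℝ → ℝ := fun ε => if ε ≤ δ 1 then 2 * ε ^ (-(1 / (mf ε : ℝ))) else 2 / ε with hRdef
  refine ⟨r, R, ⟨?_, ?_⟩, ⟨?_, ?_⟩, ?_⟩
  · -- positivity of r
    intro ε hε hε1
    simp only [hrdef]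
    by_cases h : ε ≤ δ 1
    · rw [if_pos h]
      have := Real.rpow_pos_of_pos hε (1 / (mf ε : ℝ))
      linarith
    · rw [if_neg h]; linarith
  · -- slow scale infinitesimal property of r
    intro a ha
    set M : ℕ := max 1 ⌈2 / a⌉₊ with hM
    have hM1 : 1 ≤ M := le_max_left _ _
    have hMa : 2 / a ≤ (M : ℝ) := le_trans (Nat.le_ceil _) (by exact_mod_cast le_max_right _ _)
    have hM0 : (0 : ℝ) < (M : ℝ) := by exact_mod_cast hM1
    have hM2a : 1 / (M : ℝ) ≤ a / 2 := by
      rw [div_le_div_iff₀ hM0 (by norm_num)]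
      calc (1 : ℝ) * 2 = a * (2 / a) := by field_simp
        _ ≤ a * M := by
            exact mul_le_mul_of_nonneg_left hMa ha.le
    refine ⟨min (δ M) ((1 / 2 : ℝ) ^ (2 / a)), lt_min (hδpos M) (by positivity),
      fun ε hε hε' => ?_⟩
    have hεδM : ε ≤ δ M := hε'.trans (min_le_left _ _)
    have hεc : ε ≤ (1 / 2 : ℝ) ^ (2 / a) := hε'.trans (min_le_right _ _)
    have hεδ1 : ε ≤ δ 1 := hεδM.trans (hδanti 1 M hM1)
    have hεle1 : ε ≤ 1 := hεδ1.trans hδ1le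
    obtain ⟨hk1, hεδk⟩ := hmf1 ε hε hεδ1
    have hkM : M ≤ mf ε := hmfge M ε hε hεδM
    have hk0 : (0 : ℝ) < (mf ε : ℝ) := by exact_mod_cast hk1
    have h1mk : 1 / (mf ε : ℝ) ≤ a / 2 := by
      refine le_trans ?_ hM2a
      apply one_div_le_one_div_of_le hM0
      exact_mod_cast hkM
    have hhalf : ε ^ (a / 2) ≤ 1 / 2 := by
      calc ε ^ (a / 2) ≤ ((1 / 2 : ℝ) ^ (2 / a)) ^ (a / 2) :=
            Real.rpow_le_rpow hε.le hεc (by positivity)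
        _ = 1 / 2 := by
            rw [← Real.rpow_mul (by norm_num)]
            rw [show (2 / a) * (a / 2) = 1 by field_simp]
            exact Real.rpow_one _
    constructor
    · show ε ^ a ≤ r ε
      simp only [hrdef]
      rw [if_pos hεδ1]
      calc ε ^ a = ε ^ (a / 2) * ε ^ (a / 2) := by
            rw [← Real.rpow_add hε]; ring_nf
        _ ≤ (1 / 2) * ε ^ (a / 2) :=
            mul_le_mul_of_nonneg_right hhalf (Real.rpow_nonneg hε.le _)
        _ ≤ (1 / 2) * ε ^ (1 / (mf ε : ℝ)) :=
            mul_le_mul_of_nonneg_left (rpow_mono hε hεle1 h1mk) (by norm_num)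
        _ = ε ^ (1 / (mf ε : ℝ)) / 2 := by ring
    · show r ε ≤ a
      simp only [hrdef]
      rw [if_pos hεδ1]
      have hup := hupper ε hε hεδ1
      have h5 : 1 / (mf ε : ℝ) ≤ a / 2 := h1mk
      have h6 : (0:ℝ) < 1 / (mf ε : ℝ) := by positivity
      linarith
  · -- positivity of R
    intro ε hε hε1
    simp only [hRdef]
    by_cases h : ε ≤ δ 1
    · rw [if_pos h]
      have := Real.rpow_pos_of_pos hε (-(1 / (mf ε : ℝ)))
      linarith
    · rw [if_neg h]; positivity
  · -- slow scale property of R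
    intro a ha
    set M : ℕ := max 1 ⌈2 / a⌉₊ with hM
    have hM1 : 1 ≤ M := le_max_left _ _
    have hMa : 2 / a ≤ (M : ℝ) := le_trans (Nat.le_ceil _) (by exact_mod_cast le_max_right _ _)
    have hM0 : (0 : ℝ) < (M : ℝ) := by exact_mod_cast hM1
    have hM2a : 1 / (M : ℝ) ≤ a / 2 := by
      rw [div_le_div_iff₀ hM0 (by norm_num)]
      calc (1 : ℝ) * 2 = a * (2 / a) := by field_simp
        _ ≤ a * M := mul_le_mul_of_nonneg_left hMa ha.le
    refine ⟨min (δ M) ((1 / 2 : ℝ) ^ (2 / a)), lt_min (hδpos M) (by positivity),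
      fun ε hε hε' => ?_⟩
    have hεδM : ε ≤ δ M := hε'.trans (min_le_left _ _)
    have hεc : ε ≤ (1 / 2 : ℝ) ^ (2 / a) := hε'.trans (min_le_right _ _)
    have hεδ1 : ε ≤ δ 1 := hεδM.trans (hδanti 1 M hM1)
    have hεle1 : ε ≤ 1 := hεδ1.trans hδ1le
    obtain ⟨hk1, hεδk⟩ := hmf1 ε hε hεδ1
    have hkM : M ≤ mf ε := hmfge M ε hε hεδM
    have h1mk : 1 / (mf ε : ℝ) ≤ a / 2 := by
      refine le_trans ?_ hM2a
      apply one_div_le_one_div_of_le hM0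
      exact_mod_cast hkM
    have hhalf : ε ^ (a / 2) ≤ 1 / 2 := by
      calc ε ^ (a / 2) ≤ ((1 / 2 : ℝ) ^ (2 / a)) ^ (a / 2) :=
            Real.rpow_le_rpow hε.le hεc (by positivity)
        _ = 1 / 2 := by
            rw [← Real.rpow_mul (by norm_num)]
            rw [show (2 / a) * (a / 2) = 1 by field_simp]
            exact Real.rpow_one _
    have h2le : (2 : ℝ) ≤ ε ^ (-(a / 2)) := by
      rw [Real.rpow_neg hε.le]
      have := le_inv_of_le_inv' (Real.rpow_pos_of_pos hε (a / 2))
        (by rw [← one_div]; exact hhalf)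
      simpa using this
    show R ε ≤ ε ^ (-a)
    simp only [hRdef]
    rw [if_pos hεδ1]
    calc 2 * ε ^ (-(1 / (mf ε : ℝ))) ≤ 2 * ε ^ (-(a / 2)) :=
          mul_le_mul_of_nonneg_left (rpow_mono hε hεle1 (neg_le_neg h1mk)) (by norm_num)
      _ ≤ ε ^ (-(a / 2)) * ε ^ (-(a / 2)) :=
          mul_le_mul_of_nonneg_right h2le (Real.rpow_nonneg hε.le _)
      _ = ε ^ (-a) := by rw [← Real.rpow_add hε]; ring_nf
  · -- main implication
    intro ξ hmod hne hyp m
    obtain ⟨n, n', hn, hn', e₂, he₂, hcond⟩ := hyp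
    obtain ⟨en, hen, hn1⟩ := hn 1
    obtain ⟨en', hen', hn'1⟩ := hn' 1
    set M : ℕ := max m 2 with hM
    have hM1 : 1 ≤ M := le_trans (by omega) (le_max_right _ _)
    refine ⟨min (min (δ M) (1 / 4)) (min (min e₂ en) en'),
      lt_min (lt_min (hδpos M) (by norm_num)) (lt_min (lt_min he₂ hen) hen'),
      fun ε hε hε' => ?_⟩
    have hεδM : ε ≤ δ M := hε'.trans ((min_le_left _ _).trans (min_le_left _ _))
    have hε14 : ε ≤ 1 / 4 := hε'.trans ((min_le_left _ _).trans (min_le_right _ _))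
    have hεe₂ : ε ≤ e₂ := hε'.trans ((min_le_right _ _).trans ((min_le_left _ _).trans (min_le_left _ _)))
    have hεen : ε ≤ en := hε'.trans ((min_le_right _ _).trans ((min_le_left _ _).trans (min_le_right _ _)))
    have hεen' : ε ≤ en' := hε'.trans ((min_le_right _ _).trans (min_le_right _ _))
    have hεδ1 : ε ≤ δ 1 := hεδM.trans (hδanti 1 M hM1)
    have hεle1 : ε ≤ 1 := by linarith
    obtain ⟨hk1, hεδk⟩ := hmf1 ε hε hεδ1
    have hkM : M ≤ mf ε := hmfge M ε hε hεδM
    have hk2 : 2 ≤ mf ε := le_trans (le_max_right m 2) hkM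
    have hkm : m ≤ mf ε := le_trans (le_max_left m 2) hkM
    have hk0 : (0 : ℝ) < (mf ε : ℝ) := by exact_mod_cast hk1
    obtain ⟨hcd, hcn⟩ := hcond ε hε hεe₂
    have hnε : n ε ≤ ε := by
      have h4 : ‖n ε‖ ≤ ε ^ ((1 : ℕ) : ℝ) := hn1 ε hε hεen
      rw [Nat.cast_one, Real.rpow_one] at h4
      exact le_trans (le_abs_self _) h4
    have hn'ε : n' ε ≤ ε := by
      have h4 : ‖n' ε‖ ≤ ε ^ ((1 : ℕ) : ℝ) := hn'1 ε hε hεen'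
      rw [Nat.cast_one, Real.rpow_one] at h4
      exact le_trans (le_abs_self _) h4
    have hεsmall : ε ≤ ε ^ (1 / (mf ε : ℝ)) / 2 := by
      have h12 : ε ^ (1 - 1 / (mf ε : ℝ)) ≤ 1 / 2 := by
        have h13 : ε ^ (1 - 1 / (mf ε : ℝ)) ≤ ε ^ ((1 : ℝ) / 2) := by
          apply rpow_mono hε hεle1
          have : 1 / (mf ε : ℝ) ≤ 1 / 2 := by
            apply one_div_le_one_div_of_le (by norm_num)
            exact_mod_cast hk2
          linarith
        have h14 : ε ^ ((1 : ℝ) / 2) ≤ 1 / 2 := by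
          calc ε ^ ((1 : ℝ) / 2) ≤ (1 / 4 : ℝ) ^ ((1 : ℝ) / 2) :=
                Real.rpow_le_rpow hε.le hε14 (by norm_num)
            _ = 1 / 2 := by
                rw [show (1 / 4 : ℝ) = (1 / 2 : ℝ) ^ (2 : ℕ) by norm_num,
                  ← Real.rpow_natCast ((1 : ℝ) / 2) 2, ← Real.rpow_mul (by norm_num)]
                norm_num
        exact h13.trans h14
      calc ε = ε ^ (1 / (mf ε : ℝ)) * ε ^ (1 - 1 / (mf ε : ℝ)) := by
            rw [← Real.rpow_add hε, show 1 / (mf ε : ℝ) + (1 - 1 / (mf ε : ℝ)) = 1 by ring,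
              Real.rpow_one]
        _ ≤ ε ^ (1 / (mf ε : ℝ)) * (1 / 2) :=
            mul_le_mul_of_nonneg_left h12 (Real.rpow_nonneg hε.le _)
        _ = ε ^ (1 / (mf ε : ℝ)) / 2 := by ring
    have hrε : r ε = ε ^ (1 / (mf ε : ℝ)) / 2 := by simp only [hrdef]; rw [if_pos hεδ1]
    have hRε : R ε = 2 * ε ^ (-(1 / (mf ε : ℝ))) := by simp only [hRdef]; rw [if_pos hεδ1]
    have hdir : ‖‖ξ ε‖⁻¹ • ξ ε - ξ₀ ε‖ ≤ ε ^ (1 / (mf ε : ℝ)) := by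
      refine le_trans hcd ?_
      rw [hrε]
      linarith
    have h1rp : (1 : ℝ) ≤ ε ^ (-(1 / (mf ε : ℝ))) := one_le_rpow_neg hε hεle1 (by positivity)
    have hnorm : ε ^ (-(1 / (mf ε : ℝ))) ≤ ‖ξ ε‖ := by
      refine le_trans ?_ hcn
      rw [hRε]
      linarith
    have hFT := hT (mf ε) hk1 ε hε (le_trans hεδk (hδt (mf ε) hk1)) (ξ ε) hnorm hdir
    show ‖FT (⇑(v ε)) (ξ ε)‖ ≤ ε ^ ((m : ℕ) : ℝ)
    refine hFT.trans (rpow_mono hε hεle1 ?_)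
    exact_mod_cast hkm

end Stmt1Aux


/-- Lemma 3.3: characterizations of the vanishing of the Fourier
transform of an S-moderate net of Schwartz functions in a generalized direction. -/
theorem stmt1 {d : ℕ} (v : ℝ → SchwartzMap (Eu d) ℂ) (hv : SModNet v)
    (ξ₀ : ℝ → Eu d) (hξ₀ : ∀ ε : ℝ, 0 < ε → ε ≤ 1 → ‖ξ₀ ε‖ = 1) :
    [ -- (1) vanishing on a conic slow scale neighbourhood, for large slow scale |ξ|
      (∃ r R : ℝ → ℝ, SlowInfPos r ∧ SlowScalePos R ∧
        ∀ ξ : ℝ → Eu d, ModNet ξ → (∀ ε : ℝ, 0 < ε → ε ≤ 1 → ξ ε ≠ 0) →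
          (∃ n n' : ℝ → ℝ, NegNet n ∧ NegNet n' ∧ SmallE fun ε =>
            ‖‖ξ ε‖⁻¹ • ξ ε - ξ₀ ε‖ ≤ r ε + n ε ∧ R ε - n' ε ≤ ‖ξ ε‖) →
          NegNet fun ε => FT (⇑(v ε)) (ξ ε)),
      -- (2) vanishing at fast scale points in fast scale directions to ξ₀
      (∀ ξ : ℝ → Eu d, ModNet ξ → FastScale ξ →
        FastInf (fun ε => ‖ξ ε‖⁻¹ • ξ ε - ξ₀ ε) →
        NegNet fun ε => FT (⇑(v ε)) (ξ ε)),
      -- (3) sup estimates on the truncated cones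
      (∀ m : ℕ, 1 ≤ m → SmallE fun ε => ∀ ξ : Eu d,
        ε ^ (-(1 / (m : ℝ))) ≤ ‖ξ‖ → ‖‖ξ‖⁻¹ • ξ - ξ₀ ε‖ ≤ ε ^ (1 / (m : ℝ)) →
        ‖FT (⇑(v ε)) ξ‖ ≤ ε ^ (m : ℝ)),
      -- (4) rapid decrease estimates on the cones
      (∃ N : ℕ, ∀ m : ℕ, 1 ≤ m → SmallE fun ε => ∀ ξ : Eu d, ξ ≠ 0 →
        ‖‖ξ‖⁻¹ • ξ - ξ₀ ε‖ ≤ ε ^ (1 / (m : ℝ)) →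
        jap ξ ^ m * ‖FT (⇑(v ε)) ξ‖ ≤ ε ^ (-(N : ℝ))) ].TFAE := by
  tfae_have 1 → 2 := Stmt1Aux.imp12 v ξ₀ hξ₀
  tfae_have 2 → 3 := Stmt1Aux.imp23 v hv ξ₀ hξ₀
  tfae_have 3 → 4 := Stmt1Aux.imp34 v hv ξ₀
  tfae_have 4 → 3 := Stmt1Aux.imp43 v ξ₀
  tfae_have 3 → 1 := Stmt1Aux.imp31 v ξ₀
  tfae_finish
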